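/- Let V be a finite set with Laplacian Δ and carré du champ Γ as above. If f : V → ℝ satisfies 1 + f(y) − f(x) ≥ 0 for all y with q(x,y) > 0, and if Γf attains its maximum over V at x, then ΔΓf(x) + 2Γ(f, Γf)(x) ≤ 0. -/
import Mathlib


open Finset Real

/-- Graph Laplacian on a finite weighted graph. -/
noncomputable def glap {V : Type*} [Fintype V] (q : V → V → ℝ) (f : V → ℝ) (x : V) : ℝ :=
  ∑ y, q x y * (f y - f x)

/-- Carré du champ operator Γ(f,g). -/
noncomputable def gGammaBil {V : Type*} [Fintype V] (q : V → V → ℝ) (f g : V → ℝ) (x : V) : ℝ :=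
  (1 / 2) * ∑ y, q x y * (f y - f x) * (g y - g x)

/-- Carré du champ Γf = Γ(f,f). -/
noncomputable def gGamma {V : Type*} [Fintype V] (q : V → V → ℝ) (f : V → ℝ) (x : V) : ℝ :=
  gGammaBil q f f x

/-- Iterated carré du champ Γ₂f = (ΔΓf − 2Γ(f,Δf))/2. -/
noncomputable def gGammaTwo {V : Type*} [Fintype V] (q : V → V → ℝ) (f : V → ℝ) (x : V) : ℝ :=
  (glap q (gGamma q f) x - 2 * gGammaBil q f (glap q f) x) / 2

theorem lap_gamma_add_two_gamma_nonpos {V : Type*} [Fintype V] (q : V → V → ℝ)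
    (hq : ∀ x y, 0 ≤ q x y) (hdiag : ∀ x, q x x = 0) (f : V → ℝ) (x : V)
    (hgrad : ∀ y, 0 < q x y → 0 ≤ 1 + f y - f x)
    (hmax : ∀ y, gGamma q f y ≤ gGamma q f x) :
    glap q (gGamma q f) x + 2 * gGammaBil q f (gGamma q f) x ≤ 0 := by
  have key : glap q (gGamma q f) x + 2 * gGammaBil q f (gGamma q f) x
      = ∑ y, q x y * (gGamma q f y - gGamma q f x) * (1 + f y - f x) := by
    simp only [glap, gGammaBil, Finset.mul_sum, ← Finset.sum_add_distrib]
    apply Finset.sum_congr rfl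
    intro y _
    ring
  rw [key]
  apply Finset.sum_nonpos
  intro y _
  rcases eq_or_lt_of_le (hq x y) with h | h
  · simp [← h]
  · have h1 : gGamma q f y - gGamma q f x ≤ 0 := sub_nonpos.mpr (hmax y)
    exact mul_nonpos_of_nonpos_of_nonneg
      (mul_nonpos_of_nonneg_of_nonpos h.le h1) (hgrad y h)
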